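/- Trump semantics is downward closed: for every IFG formula φ, suitable structure 𝔄, and teams V' ⊆ V, if 𝔄 ⊨⁺ φ[V] then 𝔄 ⊨⁺ φ[V'], and if 𝔄 ⊨⁻ φ[V] then 𝔄 ⊨⁻ φ[V']. -/

import Mathlib

/-- Two valuations agree outside `J`: they take the same values on all coordinates not in `J`. -/
def AgreeOutside {ι A : Type*} (J : Set ι) (a b : ι → A) : Prop :=
  ∀ i, i ∉ J → a i = b i

/-- `𝒰` is a `J`-saturated disjoint cover of `V`. -/
def IsSatDisjCover {ι A : Type*} (J : Set ι) (V : Set (ι → A))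
    (𝒰 : Set (Set (ι → A))) : Prop :=
  ⋃₀ 𝒰 = V ∧ 𝒰.Pairwise Disjoint ∧
    ∀ a ∈ V, ∀ b ∈ V, AgreeOutside J a b → ∀ U ∈ 𝒰, a ∈ U → b ∈ U

/-- `V = V₁ ∪_J V₂`: a `J`-saturated disjoint (binary) cover of `V`. -/
def UnionJ {ι A : Type*} (J : Set ι) (V V₁ V₂ : Set (ι → A)) : Prop :=
  V₁ ∪ V₂ = V ∧ Disjoint V₁ V₂ ∧
    ∀ a ∈ V, ∀ b ∈ V, AgreeOutside J a b →
      ((a ∈ V₁ → b ∈ V₁) ∧ (a ∈ V₂ → b ∈ V₂))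

/-- `f : V → A` is independent of `J`. -/
def IndepOf {ι A : Type*} (J : Set ι) (V : Set (ι → A)) (f : (ι → A) → A) : Prop :=
  ∀ a ∈ V, ∀ b ∈ V, AgreeOutside J a b → f a = f b

/-- `V(n:f) = { ⃗a(n : f ⃗a) : ⃗a ∈ V }`. -/
def teamUpd {ι A : Type*} [DecidableEq ι] (n : ι) (f : (ι → A) → A)
    (V : Set (ι → A)) : Set (ι → A) :=
  (fun a => Function.update a n (f a)) '' V

/-- `V(n:A) = { ⃗a(n : c) : ⃗a ∈ V, c ∈ A }`. -/
def teamExp {ι A : Type*} [DecidableEq ι] (n : ι) (V : Set (ι → A)) : Set (ι → A) :=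
  {x | ∃ a ∈ V, ∃ c : A, x = Function.update a n c}

/-- IFG formulas over an abstract supply of atomic formulas (given as predicates on
valuations), built by negation `∼`, slashed disjunction `∨_J`, and slashed
existential quantification `∃ v_n / J`. -/
inductive IFG (ι A : Type*) where
  | atom : ((ι → A) → Prop) → IFG ι A
  | not : IFG ι A → IFG ι A
  | or : Set ι → IFG ι A → IFG ι A → IFG ι A
  | ex : ι → Set ι → IFG ι A → IFG ι A

/-- Trump semantics: `Sat φ true V` means `𝔄 ⊨⁺ φ[V]` and `Sat φ false V` means
`𝔄 ⊨⁻ φ[V]`. -/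
def Sat {ι A : Type*} [DecidableEq ι] : IFG ι A → Bool → Set (ι → A) → Prop
  | .atom P, true, V => ∀ a ∈ V, P a
  | .atom P, false, V => ∀ a ∈ V, ¬ P a
  | .not ψ, b, V => Sat ψ (!b) V
  | .or J ψ₁ ψ₂, true, V =>
      ∃ V₁ V₂, UnionJ J V V₁ V₂ ∧ Sat ψ₁ true V₁ ∧ Sat ψ₂ true V₂
  | .or J ψ₁ ψ₂, false, V => Sat ψ₁ false V ∧ Sat ψ₂ false V
  | .ex n J ψ, true, V => ∃ f, IndepOf J V f ∧ Sat ψ true (teamUpd n f V)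
  | .ex n J ψ, false, V => Sat ψ false (teamExp n V)


theorem sat_mono {ι A : Type*} [DecidableEq ι] (φ : IFG ι A) :
    ∀ (b : Bool) (V V' : Set (ι → A)), V' ⊆ V → Sat φ b V → Sat φ b V' := by
  induction φ with
  | atom P =>
    intro b V V' hsub h
    cases b <;> exact fun a ha => h a (hsub ha)
  | not ψ ih =>
    intro b V V' hsub h
    exact ih (!b) V V' hsub h
  | or J ψ₁ ψ₂ ih₁ ih₂ =>
    intro b V V' hsub h
    cases b with
    | false => exact ⟨ih₁ false V V' hsub h.1, ih₂ false V V' hsub h.2⟩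
    | true =>
      obtain ⟨V₁, V₂, ⟨hcov, hdisj, hsat⟩, h₁, h₂⟩ := h
      refine ⟨V₁ ∩ V', V₂ ∩ V', ⟨?_, ?_, ?_⟩,
        ih₁ true V₁ (V₁ ∩ V') Set.inter_subset_left h₁,
        ih₂ true V₂ (V₂ ∩ V') Set.inter_subset_left h₂⟩
      · rw [← Set.union_inter_distrib_right, hcov]
        exact Set.inter_eq_right.mpr hsub
      · exact hdisj.mono Set.inter_subset_left Set.inter_subset_left
      · intro a ha b hb hab
        have hs := hsat a (hsub ha) b (hsub hb) hab
        exact ⟨fun h => ⟨(hs.1 h.1), hb⟩, fun h => ⟨(hs.2 h.1), hb⟩⟩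
  | ex n J ψ ih =>
    intro b V V' hsub h
    cases b with
    | true =>
      obtain ⟨f, hf, hs⟩ := h
      refine ⟨f, fun a ha b hb hab => hf a (hsub ha) b (hsub hb) hab, ?_⟩
      exact ih true _ _ (Set.image_mono hsub) hs
    | false =>
      refine ih false _ _ ?_ h
      rintro x ⟨a, ha, c, rfl⟩
      exact ⟨a, hsub ha, c, rfl⟩

/-- Downward closure of trump semantics: satisfaction transfers to subteams. -/
theorem sat_downward_closed {ι A : Type*} [DecidableEq ι] (φ : IFG ι A)
    (V V' : Set (ι → A)) (hV' : V' ⊆ V) :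
    (Sat φ true V → Sat φ true V') ∧ (Sat φ false V → Sat φ false V') :=
  ⟨sat_mono φ true V V' hV', sat_mono φ false V V' hV'⟩
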